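/- Let (V,E,c) be a connected network. Define, for x, y ∈ V, the resistance distance d_c(x,y) = sup{ |u(x) − u(y)|² : u : V → ℝ has finite energy and E_c(u,u) ≤ 1 }. Then d_c is a metric on V: d_c(x,y) is finite for all x,y; d_c(x,y) = d_c(y,x); d_c(x,y) = 0 if and only if x = y; and d_c(x,y) ≤ d_c(x,z) + d_c(z,y) for all x, y, z ∈ V. -/

import Mathlib

/-- An (infinite) electrical network: a countable graph `(V, E)` in which every vertex has a
finite, nonempty set of neighbors, no self-loops, together with a symmetric positive conductance
function `c` on the edges (extended by `0` off the edge set). -/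
structure Network (V : Type*) where
  adj : V → V → Prop
  adj_symm : ∀ x y, adj x y ↔ adj y x
  adj_irrefl : ∀ x, ¬ adj x x
  nbhd_finite : ∀ x, {y | adj x y}.Finite
  nbhd_nonempty : ∀ x, ∃ y, adj x y
  c : V → V → ℝ
  c_pos : ∀ x y, adj x y → 0 < c x y
  c_symm : ∀ x y, c x y = c y x
  c_eq_zero : ∀ x y, ¬ adj x y → c x y = 0

namespace Network

variable {V : Type*}

/-- The graph Laplacian `(Δu)(x) = ∑_{y ~ x} c x y (u x − u y)`; the sum has only finitely many
nonzero terms since `c x y = 0` unless `y` is one of the finitely many neighbors of `x`. -/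
noncomputable def lap (N : Network V) (u : V → ℂ) (x : V) : ℂ :=
  ∑' y : V, (N.c x y : ℂ) * (u x - u y)

/-- The (sesquilinear) energy form
`E_c(u, v) = (1/2) ∑_{(x,y)} c x y (conj (u x) − conj (u y)) (v x − v y)`. -/
noncomputable def energy (N : Network V) (u v : V → ℂ) : ℂ :=
  (1 / 2) * ∑' p : V × V,
    (N.c p.1 p.2 : ℂ) * (starRingEnd ℂ (u p.1) - starRingEnd ℂ (u p.2)) * (v p.1 - v p.2)

/-- `u : V → ℂ` has finite energy if `∑_{(x,y)} c x y |u x − u y|²` is summable. -/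
def FiniteEnergy (N : Network V) (u : V → ℂ) : Prop :=
  Summable fun p : V × V => N.c p.1 p.2 * ‖u p.1 - u p.2‖ ^ 2

/-- The quadratic energy `E_c(u, u) = (1/2) ∑_{(x,y)} c x y |u x − u y|²` as a real number. -/
noncomputable def energySq (N : Network V) (u : V → ℂ) : ℝ :=
  (1 / 2) * ∑' p : V × V, N.c p.1 p.2 * ‖u p.1 - u p.2‖ ^ 2

/-- The graph Laplacian acting on real-valued functions. -/
noncomputable def lapR (N : Network V) (u : V → ℝ) (x : V) : ℝ :=
  ∑' y : V, N.c x y * (u x - u y)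

/-- The real energy form `E_c(u, v) = (1/2) ∑_{(x,y)} c x y (u x − u y)(v x − v y)`. -/
noncomputable def energyR (N : Network V) (u v : V → ℝ) : ℝ :=
  (1 / 2) * ∑' p : V × V, N.c p.1 p.2 * (u p.1 - u p.2) * (v p.1 - v p.2)

/-- The network is connected: any two vertices are joined by a finite path of edges. -/
def Connected (N : Network V) : Prop :=
  ∀ x y : V, ∃ (n : ℕ) (p : ℕ → V), p 0 = x ∧ p n = y ∧ ∀ i < n, N.adj (p i) (p (i + 1))

end Network

/-- The set of values `|u(x) − u(y)|²` over real-valued finite-energy functions `u` with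
`E_c(u, u) ≤ 1`; the resistance distance `d_c(x, y)` is its supremum. -/
def Network.distSet {V : Type*} (N : Network V) (x y : V) : Set ℝ :=
  {r : ℝ | ∃ u : V → ℝ,
    Summable (fun p : V × V => N.c p.1 p.2 * (u p.1 - u p.2) ^ 2) ∧
    N.energyR u u ≤ 1 ∧ r = (u x - u y) ^ 2}

/-- The resistance distance `d_c(x,y) = sup {|u(x) − u(y)|² : u of finite energy, E_c(u,u) ≤ 1}`. -/
noncomputable def Network.dc {V : Type*} (N : Network V) (x y : V) : ℝ :=
  sSup (N.distSet x y)

namespace Stmt17Aux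

open Finset Filter Topology

variable {V : Type*} (N : Network V)

/-- The energy density of `u` over ordered pairs. -/
noncomputable def ed (u : V → ℝ) : V × V → ℝ :=
  fun p => N.c p.1 p.2 * (u p.1 - u p.2) ^ 2

/-- The bilinear energy density. -/
noncomputable def eb (u v : V → ℝ) : V × V → ℝ :=
  fun p => N.c p.1 p.2 * (u p.1 - u p.2) * (v p.1 - v p.2)

lemma c_nonneg (x y : V) : 0 ≤ N.c x y := by
  by_cases h : N.adj x y
  · exact (N.c_pos x y h).le
  · exact (N.c_eq_zero x y h).ge

lemma ed_nonneg (u : V → ℝ) (p : V × V) : 0 ≤ ed N u p :=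
  mul_nonneg (c_nonneg N _ _) (sq_nonneg _)

lemma energyR_eq_ed (u : V → ℝ) : N.energyR u u = (1 / 2) * ∑' p, ed N u p := by
  unfold Network.energyR ed
  congr 1
  exact tsum_congr fun p => by ring

lemma energyR_eq_eb (u v : V → ℝ) : N.energyR u v = (1 / 2) * ∑' p, eb N u v p := rfl

lemma energyR_nonneg (u : V → ℝ) : 0 ≤ N.energyR u u := by
  rw [energyR_eq_ed]
  have : 0 ≤ ∑' p, ed N u p := tsum_nonneg (ed_nonneg N u)
  linarith

lemma energyR_symm (u v : V → ℝ) : N.energyR u v = N.energyR v u := by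
  unfold Network.energyR
  congr 1
  exact tsum_congr fun p => by ring

lemma abs_mul_le_half_sq_add_sq (a b : ℝ) : |a * b| ≤ (a ^ 2 + b ^ 2) / 2 := by
  rw [abs_mul]
  nlinarith [sq_nonneg (|a| - |b|), sq_abs a, sq_abs b, abs_nonneg a, abs_nonneg b]

lemma abs_eb_le (u v : V → ℝ) (p : V × V) :
    |eb N u v p| ≤ (1 / 2) * (ed N u p + ed N v p) := by
  unfold eb ed
  have hc := c_nonneg N p.1 p.2
  rw [mul_assoc, abs_mul, abs_of_nonneg hc]
  have h1 := abs_mul_le_half_sq_add_sq (u p.1 - u p.2) (v p.1 - v p.2)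
  nlinarith [abs_nonneg ((u p.1 - u p.2) * (v p.1 - v p.2))]

lemma summable_eb {u v : V → ℝ} (hu : Summable (ed N u)) (hv : Summable (ed N v)) :
    Summable (eb N u v) := by
  rw [← summable_abs_iff]
  exact Summable.of_nonneg_of_le (fun p => abs_nonneg _) (abs_eb_le N u v)
    ((hu.add hv).mul_left (1 / 2))

lemma ed_comb (a b k : ℝ) (u v : V → ℝ) (p : V × V) :
    ed N (fun z => a * u z + b * v z + k) p =
      a ^ 2 * ed N u p + b ^ 2 * ed N v p + (2 * a * b) * eb N u v p := by
  unfold ed eb; ring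

lemma summable_ed_comb (a b k : ℝ) {u v : V → ℝ} (hu : Summable (ed N u))
    (hv : Summable (ed N v)) :
    Summable (ed N (fun z => a * u z + b * v z + k)) := by
  have h := ((hu.mul_left (a ^ 2)).add (hv.mul_left (b ^ 2))).add
    ((summable_eb N hu hv).mul_left (2 * a * b))
  exact h.congr fun p => (ed_comb N a b k u v p).symm

lemma energyR_comb (a b k : ℝ) {u v : V → ℝ} (hu : Summable (ed N u))
    (hv : Summable (ed N v)) :
    N.energyR (fun z => a * u z + b * v z + k) (fun z => a * u z + b * v z + k) =
      a ^ 2 * N.energyR u u + b ^ 2 * N.energyR v v + (2 * a * b) * N.energyR u v := by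
  rw [energyR_eq_ed, energyR_eq_ed, energyR_eq_ed, energyR_eq_eb]
  rw [tsum_congr (ed_comb N a b k u v)]
  rw [Summable.tsum_add ((hu.mul_left (a ^ 2)).add (hv.mul_left (b ^ 2)))
    ((summable_eb N hu hv).mul_left (2 * a * b)),
    Summable.tsum_add (hu.mul_left (a ^ 2)) (hv.mul_left (b ^ 2)),
    tsum_mul_left, tsum_mul_left, tsum_mul_left]
  ring

lemma energyR_right_decomp {v g f : V → ℝ} (hv : Summable (ed N v)) (hg : Summable (ed N g))
    (s k : ℝ) (hf : ∀ z, f z = g z + k + s * v z) :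
    N.energyR v f = N.energyR v g + s * N.energyR v v := by
  have hterm : ∀ p, eb N v f p = eb N v g p + s * eb N v v p := by
    intro p
    unfold eb
    rw [hf p.1, hf p.2]
    ring
  rw [energyR_eq_eb, energyR_eq_eb, energyR_eq_eb, tsum_congr hterm,
    Summable.tsum_add (summable_eb N hv hg) ((summable_eb N hv hv).mul_left s), tsum_mul_left]
  ring

/-- Path bound: on a connected network, point differences are controlled by the energy. -/
lemma path_bound (hconn : N.Connected) (x y : V) :
    ∃ K : ℝ, 0 ≤ K ∧ ∀ u : V → ℝ, Summable (ed N u) →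
      (u x - u y) ^ 2 ≤ K * ∑' p, ed N u p := by
  obtain ⟨n, p, hp0, hpn, hadj⟩ := hconn x y
  set S : ℝ := ∑ i ∈ range n, 1 / Real.sqrt (N.c (p i) (p (i + 1))) with hS
  refine ⟨S ^ 2, sq_nonneg S, fun u hu => ?_⟩
  set T : ℝ := ∑' q, ed N u q with hT
  have hT0 : 0 ≤ T := tsum_nonneg (ed_nonneg N u)
  have hstep : ∀ i < n, |u (p i) - u (p (i + 1))| ≤
      (1 / Real.sqrt (N.c (p i) (p (i + 1)))) * Real.sqrt T := by
    intro i hi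
    have hc : 0 < N.c (p i) (p (i + 1)) := N.c_pos _ _ (hadj i hi)
    have h1 : ed N u (p i, p (i + 1)) ≤ T :=
      Summable.le_tsum hu (p i, p (i + 1)) fun q _ => ed_nonneg N u q
    have h2 : (u (p i) - u (p (i + 1))) ^ 2 ≤ T / N.c (p i) (p (i + 1)) := by
      rw [le_div_iff₀ hc]
      calc (u (p i) - u (p (i + 1))) ^ 2 * N.c (p i) (p (i + 1))
          = ed N u (p i, p (i + 1)) := by unfold ed; ring
        _ ≤ T := h1
    calc |u (p i) - u (p (i + 1))| = Real.sqrt ((u (p i) - u (p (i + 1))) ^ 2) :=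
          (Real.sqrt_sq_eq_abs _).symm
      _ ≤ Real.sqrt (T / N.c (p i) (p (i + 1))) := Real.sqrt_le_sqrt h2
      _ = (1 / Real.sqrt (N.c (p i) (p (i + 1)))) * Real.sqrt T := by
          rw [Real.sqrt_div hT0, div_eq_mul_inv, one_div, mul_comm]
  have htel : u x - u y = ∑ i ∈ range n, (u (p i) - u (p (i + 1))) := by
    rw [Finset.sum_range_sub' (fun i => u (p i)) n, hp0, hpn]
  have habs : |u x - u y| ≤ S * Real.sqrt T := by
    rw [htel]
    calc |∑ i ∈ range n, (u (p i) - u (p (i + 1)))|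
        ≤ ∑ i ∈ range n, |u (p i) - u (p (i + 1))| := Finset.abs_sum_le_sum_abs _ _
      _ ≤ ∑ i ∈ range n, (1 / Real.sqrt (N.c (p i) (p (i + 1)))) * Real.sqrt T :=
          Finset.sum_le_sum fun i hi => hstep i (Finset.mem_range.mp hi)
      _ = S * Real.sqrt T := by rw [hS, Finset.sum_mul]
  have hS0 : 0 ≤ S := Finset.sum_nonneg fun i _ => by positivity
  calc (u x - u y) ^ 2 = |u x - u y| ^ 2 := (sq_abs _).symm
    _ ≤ (S * Real.sqrt T) ^ 2 := by
        exact pow_le_pow_left₀ (abs_nonneg _) habs 2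
    _ = S ^ 2 * T := by rw [mul_pow, Real.sq_sqrt hT0]

/-- Euler–Lagrange equation for a minimizer. -/
lemma euler_lagrange {x y : V} {v : V → ℝ} (hv : Summable (ed N v)) (hvx : v x = 1)
    (hvy : v y = 0)
    (hmin : ∀ u : V → ℝ, Summable (ed N u) → u x = 1 → u y = 0 →
      N.energyR v v ≤ N.energyR u u)
    {g : V → ℝ} (hg : Summable (ed N g)) (hgx : g x = 0) (hgy : g y = 0) :
    N.energyR v g = 0 := by
  set B := N.energyR v g with hB
  set Eg := N.energyR g g with hEg
  have hEg0 : 0 ≤ Eg := energyR_nonneg N g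
  have key : ∀ t : ℝ, 0 ≤ t ^ 2 * Eg + 2 * t * B := by
    intro t
    have hsum : Summable (ed N (fun z => 1 * v z + t * g z + 0)) :=
      summable_ed_comb N 1 t 0 hv hg
    have hx : (fun z => 1 * v z + t * g z + 0) x = 1 := by simp [hvx, hgx]
    have hy : (fun z => 1 * v z + t * g z + 0) y = 0 := by simp [hvy, hgy]
    have hle := hmin _ hsum hx hy
    have hexp := energyR_comb N 1 t 0 hv hg
    rw [hexp] at hle
    nlinarith [hle]
  have h := key (-B / (Eg + 1))
  have h1 : (0:ℝ) < Eg + 1 := by linarith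
  have h2 : (-B / (Eg + 1)) ^ 2 * Eg + 2 * (-B / (Eg + 1)) * B =
      -(B ^ 2) * (Eg + 2) / (Eg + 1) ^ 2 := by
    field_simp
    ring
  rw [h2] at h
  have h3 : 0 ≤ -(B ^ 2) * (Eg + 2) := by
    have := mul_nonneg h (sq_nonneg (Eg + 1))
    calc (0:ℝ) ≤ -(B ^ 2) * (Eg + 2) / (Eg + 1) ^ 2 * (Eg + 1) ^ 2 := this
      _ = -(B ^ 2) * (Eg + 2) := by field_simp
  nlinarith [sq_nonneg B]

/-- Reproducing property of a minimizer. -/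
lemma reproducing {x y : V} {v : V → ℝ} (hv : Summable (ed N v)) (hvx : v x = 1)
    (hvy : v y = 0)
    (hmin : ∀ u : V → ℝ, Summable (ed N u) → u x = 1 → u y = 0 →
      N.energyR v v ≤ N.energyR u u)
    {f : V → ℝ} (hf : Summable (ed N f)) :
    N.energyR v f = (f x - f y) * N.energyR v v := by
  set s := f x - f y with hs
  set g : V → ℝ := fun z => 1 * f z + (-s) * v z + (- f y) with hgdef
  have hg : Summable (ed N g) := summable_ed_comb N 1 (-s) (-f y) hf hv
  have hgx : g x = 0 := by simp only [hgdef, hvx]; ring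
  have hgy : g y = 0 := by simp only [hgdef, hvy]; ring
  have hdec : N.energyR v f = N.energyR v g + s * N.energyR v v :=
    energyR_right_decomp N hv hg s (f y) (fun z => by simp only [hgdef]; ring)
  rw [hdec, euler_lagrange N hv hvx hvy hmin hg hgx hgy, zero_add]

lemma clamp_sq_le (a b : ℝ) :
    (max 0 (min 1 a) - max 0 (min 1 b)) ^ 2 ≤ (a - b) ^ 2 := by
  have h1 : |min 1 a - min 1 b| ≤ |a - b| := by
    have h := abs_min_sub_min_le_max 1 a 1 b
    rwa [sub_self, abs_zero, max_eq_right (abs_nonneg _)] at h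
  have h2 : |max 0 (min 1 a) - max 0 (min 1 b)| ≤ |min 1 a - min 1 b| := by
    rw [max_comm 0 (min 1 a), max_comm 0 (min 1 b)]
    exact abs_max_sub_max_le_abs _ _ _
  calc (max 0 (min 1 a) - max 0 (min 1 b)) ^ 2
      = |max 0 (min 1 a) - max 0 (min 1 b)| ^ 2 := (sq_abs _).symm
    _ ≤ |a - b| ^ 2 := by
        exact pow_le_pow_left₀ (abs_nonneg _) (h2.trans h1) 2
    _ = (a - b) ^ 2 := sq_abs _

lemma tsum_ed_eq (u : V → ℝ) : ∑' p, ed N u p = 2 * N.energyR u u := by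
  rw [energyR_eq_ed]; ring

/-- Existence of a clamped energy minimizer with boundary values `1` at `x`, `0` at `y`. -/
lemma exists_min (hconn : N.Connected) {x y : V} (hxy : x ≠ y) :
    ∃ v : V → ℝ, Summable (ed N v) ∧ v x = 1 ∧ v y = 0 ∧ (∀ z, 0 ≤ v z ∧ v z ≤ 1) ∧
      0 < N.energyR v v ∧
      ∀ u : V → ℝ, Summable (ed N u) → u x = 1 → u y = 0 →
        N.energyR v v ≤ N.energyR u u := by
  classical
  set A : Set ℝ := {r | ∃ u : V → ℝ, Summable (ed N u) ∧ u x = 1 ∧ u y = 0 ∧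
    r = N.energyR u u} with hA
  -- a finite-energy witness
  have hwitness : ∃ u : V → ℝ, Summable (ed N u) ∧ u x = 1 ∧ u y = 0 := by
    refine ⟨fun z => if z = x then 1 else 0, ?_, by simp, by simp [Ne.symm hxy]⟩
    set nb : Finset V := (N.nbhd_finite x).toFinset with hnb
    apply summable_of_ne_finset_zero (s := (({x} : Finset V) ×ˢ nb) ∪ (nb ×ˢ ({x} : Finset V)))
    intro p hp
    by_cases h1 : p.1 = x <;> by_cases h2 : p.2 = x
    · simp [ed, h1, h2]
    · have hnadj : ¬ N.adj p.1 p.2 := by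
        intro hadj
        rw [h1] at hadj
        exact hp (Finset.mem_union_left _ (Finset.mem_product.mpr
          ⟨Finset.mem_singleton.mpr h1, (N.nbhd_finite x).mem_toFinset.mpr hadj⟩))
      simp [ed, N.c_eq_zero _ _ hnadj]
    · have hnadj : ¬ N.adj p.1 p.2 := by
        intro hadj
        rw [h2] at hadj
        have : N.adj x p.1 := (N.adj_symm p.1 x).mp hadj
        exact hp (Finset.mem_union_right _ (Finset.mem_product.mpr
          ⟨(N.nbhd_finite x).mem_toFinset.mpr this, Finset.mem_singleton.mpr h2⟩))
      simp [ed, N.c_eq_zero _ _ hnadj]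
    · simp [ed, h1, h2]
  obtain ⟨u₀, hu₀s, hu₀x, hu₀y⟩ := hwitness
  have hAne : A.Nonempty := ⟨N.energyR u₀ u₀, u₀, hu₀s, hu₀x, hu₀y, rfl⟩
  have hAbdd : BddBelow A := by
    refine ⟨0, fun r hr => ?_⟩
    obtain ⟨u, _, _, _, hru⟩ := hr
    exact hru ▸ energyR_nonneg N u
  obtain ⟨m, hm⟩ : ∃ m : ℝ, m = sInf A := ⟨_, rfl⟩
  have hmem : ∀ u : V → ℝ, Summable (ed N u) → u x = 1 → u y = 0 →
      m ≤ N.energyR u u := by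
    intro u hs h1 h2
    rw [hm]
    exact csInf_le hAbdd ⟨u, hs, h1, h2, rfl⟩
  -- positivity of the infimum
  obtain ⟨K₀, hK₀0, hK₀⟩ := path_bound N hconn x y
  have hone : ∀ u : V → ℝ, Summable (ed N u) → u x = 1 → u y = 0 →
      1 ≤ K₀ * (2 * N.energyR u u) := by
    intro u hs hx1 hy0
    have h := hK₀ u hs
    rw [hx1, hy0, tsum_ed_eq] at h
    norm_num at h
    exact h
  have hK₀pos : 0 < K₀ := by
    by_contra hneg
    push_neg at hneg
    have h1 := hone u₀ hu₀s hu₀x hu₀y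
    nlinarith [energyR_nonneg N u₀]
  have hmlb : 1 / (2 * K₀) ≤ m := by
    rw [hm]
    refine le_csInf hAne fun r hr => ?_
    obtain ⟨u, hs, hx1, hy0, hru⟩ := hr
    have h1 := hone u hs hx1 hy0
    rw [hru, div_le_iff₀ (by positivity)]
    nlinarith
  have hmpos : 0 < m := lt_of_lt_of_le (by positivity) hmlb
  -- minimizing sequence
  have hseq : ∀ n : ℕ, ∃ u : V → ℝ, Summable (ed N u) ∧ u x = 1 ∧ u y = 0 ∧
      N.energyR u u < m + 1 / ((n : ℝ) + 1) := by
    intro n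
    have hlt : sInf A < m + 1 / ((n : ℝ) + 1) := by
      rw [hm]
      exact lt_add_of_pos_right _ (by positivity)
    obtain ⟨r, hrA, hrlt⟩ := exists_lt_of_csInf_lt hAne hlt
    obtain ⟨u, hs, hx1, hy0, hru⟩ := hrA
    exact ⟨u, hs, hx1, hy0, hru ▸ hrlt⟩
  choose w hw1 hw2 hw3 hw4 using hseq
  -- energy of differences of the minimizing sequence
  have hdiff : ∀ n k : ℕ,
      N.energyR (fun z => 1 * w n z + (-1) * w k z + 0)
          (fun z => 1 * w n z + (-1) * w k z + 0)
        ≤ 2 / ((n : ℝ) + 1) + 2 / ((k : ℝ) + 1) := by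
    intro n k
    have hmids : Summable (ed N (fun z => (1/2 : ℝ) * w n z + (1/2 : ℝ) * w k z + 0)) :=
      summable_ed_comb N _ _ _ (hw1 n) (hw1 k)
    have hmid : m ≤ N.energyR (fun z => (1/2 : ℝ) * w n z + (1/2 : ℝ) * w k z + 0)
        (fun z => (1/2 : ℝ) * w n z + (1/2 : ℝ) * w k z + 0) :=
      hmem _ hmids (by norm_num [hw2 n, hw2 k]) (by norm_num [hw3 n, hw3 k])
    have e1 := energyR_comb N 1 (-1) 0 (hw1 n) (hw1 k)
    have e2 := energyR_comb N (1/2 : ℝ) (1/2 : ℝ) 0 (hw1 n) (hw1 k)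
    rw [e2] at hmid
    rw [e1]
    have h4 := hw4 n
    have h5 := hw4 k
    have hr1 : (2:ℝ) / ((n:ℝ) + 1) = 2 * (1 / ((n:ℝ) + 1)) := by ring
    have hr2 : (2:ℝ) / ((k:ℝ) + 1) = 2 * (1 / ((k:ℝ) + 1)) := by ring
    rw [hr1, hr2]
    norm_num at hmid ⊢
    simp only [one_div] at h4 h5 hmid ⊢
    linarith
  -- pointwise control of differences
  have hptbound : ∀ z : V, ∃ K : ℝ, 0 ≤ K ∧ ∀ n k : ℕ,
      (w n z - w k z) ^ 2 ≤ K * (2 / ((n : ℝ) + 1) + 2 / ((k : ℝ) + 1)) := by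
    intro z
    obtain ⟨K, hK0, hK⟩ := path_bound N hconn z y
    refine ⟨2 * K, by linarith, fun n k => ?_⟩
    set d : V → ℝ := fun zz => 1 * w n zz + (-1) * w k zz + 0 with hd
    have hds : Summable (ed N d) := summable_ed_comb N 1 (-1) 0 (hw1 n) (hw1 k)
    have h1 := hK d hds
    have hdy : d y = 0 := by norm_num [hd, hw3 n, hw3 k]
    have hdz : d z = w n z - w k z := by simp only [hd]; ring
    rw [hdy, hdz, sub_zero, tsum_ed_eq] at h1
    have h3 : N.energyR d d ≤ 2 / ((n : ℝ) + 1) + 2 / ((k : ℝ) + 1) := hdiff n k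
    have h4 := mul_le_mul_of_nonneg_left h3 hK0
    linarith [h1, h4]
  -- pointwise Cauchy, hence a pointwise limit
  have hcauchy : ∀ z : V, CauchySeq fun n => w n z := by
    intro z
    obtain ⟨K, hK0, hK⟩ := hptbound z
    rw [Metric.cauchySeq_iff']
    intro ε hε
    obtain ⟨M, hM⟩ := exists_nat_gt (4 * (K + 1) / ε ^ 2)
    refine ⟨M, fun n hn => ?_⟩
    have h1 := hK n M
    have hM1 : (0:ℝ) < (M:ℝ) + 1 := by positivity
    have h2 : 2 / ((n:ℝ) + 1) ≤ 2 / ((M:ℝ) + 1) := by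
      apply div_le_div_of_nonneg_left (by norm_num) hM1
      have : (M:ℝ) ≤ (n:ℝ) := Nat.cast_le.mpr hn
      linarith
    have h3 : (w n z - w M z) ^ 2 ≤ K * (4 / ((M:ℝ) + 1)) := by
      calc (w n z - w M z) ^ 2 ≤ K * (2 / ((n:ℝ) + 1) + 2 / ((M:ℝ) + 1)) := h1
        _ ≤ K * (4 / ((M:ℝ) + 1)) := by
            apply mul_le_mul_of_nonneg_left _ hK0
            have h4 : (4:ℝ) / ((M:ℝ) + 1) = 2 / ((M:ℝ) + 1) + 2 / ((M:ℝ) + 1) := by ring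
            rw [h4]
            linarith
    have h5 : K * (4 / ((M:ℝ) + 1)) < ε ^ 2 := by
      have h6 : 4 * (K + 1) < (M:ℝ) * ε ^ 2 :=
        (div_lt_iff₀ (by positivity)).mp hM
      have h7 : K * (4 / ((M:ℝ) + 1)) = 4 * K / ((M:ℝ) + 1) := by ring
      rw [h7, div_lt_iff₀ hM1]
      nlinarith
    rw [Real.dist_eq]
    exact abs_lt_of_sq_lt_sq (lt_of_le_of_lt h3 h5) hε.le
  choose v0 hv0 using fun z => cauchySeq_tendsto_of_complete (hcauchy z)
  have hv0x : v0 x = 1 := by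
    have h := hv0 x
    rw [show (fun n => w n x) = fun _ : ℕ => (1:ℝ) from funext hw2] at h
    exact tendsto_nhds_unique h tendsto_const_nhds
  have hv0y : v0 y = 0 := by
    have h := hv0 y
    rw [show (fun n => w n y) = fun _ : ℕ => (0:ℝ) from funext hw3] at h
    exact tendsto_nhds_unique h tendsto_const_nhds
  -- finite energy of the limit, with energy at most `m`
  have hsums : ∀ s : Finset (V × V), ∑ p ∈ s, ed N v0 p ≤ 2 * m := by
    intro s
    have hlhs : Tendsto (fun n => ∑ p ∈ s, ed N (w n) p) atTop
        (𝓝 (∑ p ∈ s, ed N v0 p)) := by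
      apply tendsto_finset_sum
      intro p _
      have h1 : Tendsto (fun n => w n p.1 - w n p.2) atTop (𝓝 (v0 p.1 - v0 p.2)) :=
        (hv0 p.1).sub (hv0 p.2)
      have h2 := (h1.pow 2).const_mul (N.c p.1 p.2)
      simpa [ed] using h2
    have h0 : Tendsto (fun n : ℕ => (2:ℝ) * (1 / ((n:ℝ) + 1))) atTop (𝓝 0) := by
      have h := tendsto_one_div_add_atTop_nhds_zero_nat.const_mul (2:ℝ)
      rwa [mul_zero] at h
    have hrhs : Tendsto (fun n : ℕ => 2 * m + 2 * (1 / ((n:ℝ) + 1))) atTop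
        (𝓝 (2 * m + 0)) := tendsto_const_nhds.add h0
    rw [add_zero] at hrhs
    refine le_of_tendsto_of_tendsto' hlhs hrhs fun n => ?_
    calc ∑ p ∈ s, ed N (w n) p ≤ ∑' p, ed N (w n) p :=
          Summable.sum_le_tsum s (fun p _ => ed_nonneg N _ p) (hw1 n)
      _ = 2 * N.energyR (w n) (w n) := tsum_ed_eq N (w n)
      _ ≤ 2 * m + 2 * (1 / ((n:ℝ) + 1)) := by linarith [hw4 n]
  have hFE0 : Summable (ed N v0) := summable_of_sum_le (fun p => ed_nonneg N v0 p) hsums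
  have hEv0 : N.energyR v0 v0 ≤ m := by
    have h := Summable.tsum_le_of_sum_le hFE0 hsums
    rw [energyR_eq_ed]
    linarith
  -- clamp the minimizer to `[0, 1]`
  set v : V → ℝ := fun z => max 0 (min 1 (v0 z)) with hvdef
  have hvx : v x = 1 := by norm_num [hvdef, hv0x]
  have hvy : v y = 0 := by norm_num [hvdef, hv0y]
  have hrange : ∀ z, 0 ≤ v z ∧ v z ≤ 1 := fun z =>
    ⟨le_max_left _ _, max_le (by norm_num) (min_le_left _ _)⟩
  have hedle : ∀ p, ed N v p ≤ ed N v0 p := fun p =>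
    mul_le_mul_of_nonneg_left (clamp_sq_le _ _) (c_nonneg N _ _)
  have hFE : Summable (ed N v) :=
    Summable.of_nonneg_of_le (fun p => ed_nonneg N v p) hedle hFE0
  have hEv : N.energyR v v ≤ m := by
    have h := Summable.tsum_le_tsum hedle hFE hFE0
    rw [energyR_eq_ed]
    rw [energyR_eq_ed] at hEv0
    linarith
  refine ⟨v, hFE, hvx, hvy, hrange, ?_, fun u hs h1 h2 => ?_⟩
  · exact lt_of_lt_of_le hmpos (hmem v hFE hvx hvy)
  · exact hEv.trans (hmem u hs h1 h2)

lemma distSet_eq (x y : V) : N.distSet x y =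
    {r : ℝ | ∃ u : V → ℝ, Summable (ed N u) ∧ N.energyR u u ≤ 1 ∧ r = (u x - u y) ^ 2} :=
  rfl

lemma zero_mem_distSet (x y : V) : (0 : ℝ) ∈ N.distSet x y := by
  rw [distSet_eq]
  refine ⟨fun _ => 0, ?_, ?_, by ring⟩
  · exact summable_zero.congr fun p => by simp [ed]
  · rw [energyR_eq_ed]
    have : ∀ p : V × V, ed N (fun _ => (0:ℝ)) p = 0 := fun p => by simp [ed]
    rw [tsum_congr this, tsum_zero]
    norm_num

lemma bddAbove_distSet (hconn : N.Connected) (x y : V) : BddAbove (N.distSet x y) := by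
  obtain ⟨K, hK0, hK⟩ := path_bound N hconn x y
  refine ⟨2 * K, fun r hr => ?_⟩
  rw [distSet_eq] at hr
  obtain ⟨u, hs, hE, hre⟩ := hr
  have h1 := hK u hs
  rw [tsum_ed_eq] at h1
  have h2 := mul_le_mul_of_nonneg_left hE hK0
  rw [hre]
  nlinarith [energyR_nonneg N u]

lemma dc_nonneg (hconn : N.Connected) (x y : V) : 0 ≤ N.dc x y :=
  le_csSup (bddAbove_distSet N hconn x y) (zero_mem_distSet N x y)

lemma dc_self (hconn : N.Connected) (x : V) : N.dc x x = 0 := by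
  refine le_antisymm ?_ (dc_nonneg N hconn x x)
  apply csSup_le ⟨0, zero_mem_distSet N x x⟩
  rintro r hr
  rw [distSet_eq] at hr
  obtain ⟨u, _, _, hre⟩ := hr
  simp [hre]

lemma dc_eq_inv (hconn : N.Connected) {x y : V} (hxy : x ≠ y) {v : V → ℝ}
    (hvs : Summable (ed N v)) (hvx : v x = 1) (hvy : v y = 0)
    (hvpos : 0 < N.energyR v v)
    (hvmin : ∀ u : V → ℝ, Summable (ed N u) → u x = 1 → u y = 0 →
      N.energyR v v ≤ N.energyR u u) :
    N.dc x y = 1 / N.energyR v v := by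
  apply le_antisymm
  · apply csSup_le ⟨0, zero_mem_distSet N x y⟩
    rintro r hr
    rw [distSet_eq] at hr
    obtain ⟨u, hsu, hEu, hre⟩ := hr
    rw [hre]
    by_cases h : u x = u y
    · rw [h, sub_self]
      have h0 : (0:ℝ) ^ 2 = 0 := by norm_num
      rw [h0]
      positivity
    · set t := u x - u y with ht
      have htne : t ≠ 0 := sub_ne_zero.mpr h
      have hws : Summable (ed N (fun z => (1/t) * u z + 0 * u z + (-(u y)/t))) :=
        summable_ed_comb N _ _ _ hsu hsu
      have hwx : (fun z => (1/t) * u z + 0 * u z + (-(u y)/t)) x = 1 := by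
        simp only
        field_simp [ht]
        ring
      have hwy : (fun z => (1/t) * u z + 0 * u z + (-(u y)/t)) y = 0 := by
        simp only
        field_simp
        ring
      have h2 := hvmin _ hws hwx hwy
      rw [energyR_comb N (1/t) 0 (-(u y)/t) hsu hsu] at h2
      rw [le_div_iff₀ hvpos]
      have h3 := mul_le_mul_of_nonneg_left h2 (sq_nonneg t)
      have h4 : t ^ 2 * ((1/t) ^ 2 * N.energyR u u + 0 ^ 2 * N.energyR u u +
          2 * (1/t) * 0 * N.energyR u u) = N.energyR u u := by
        field_simp
        ring
      rw [h4] at h3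
      linarith
  · apply le_csSup (bddAbove_distSet N hconn x y)
    rw [distSet_eq]
    set s := Real.sqrt (N.energyR v v) with hsdef
    have hspos : 0 < s := Real.sqrt_pos.mpr hvpos
    have hssq : s ^ 2 = N.energyR v v := Real.sq_sqrt hvpos.le
    refine ⟨fun z => (1/s) * v z + 0 * v z + 0, summable_ed_comb N _ _ _ hvs hvs, ?_, ?_⟩
    · rw [energyR_comb N (1/s) 0 0 hvs hvs]
      have h5 : (1/s) ^ 2 * N.energyR v v = 1 := by
        rw [div_pow, one_pow, hssq]
        field_simp
      nlinarith [h5]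
    · simp only [hvx, hvy]
      have h6 : (1/s * 1 + 0 * 1 + 0 - (1/s * 0 + 0 * 0 + 0)) ^ 2 = (1/s) ^ 2 := by ring
      rw [h6, div_pow, one_pow, hssq]

lemma dc_triangle (hconn : N.Connected) (x y z : V) :
    N.dc x y ≤ N.dc x z + N.dc z y := by
  by_cases hxy : x = y
  · subst hxy
    rw [dc_self N hconn]
    have h1 := dc_nonneg N hconn x z
    have h2 := dc_nonneg N hconn z x
    linarith
  by_cases hxz : x = z
  · subst hxz
    rw [dc_self N hconn]
    linarith
  by_cases hzy : z = y
  · subst hzy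
    rw [dc_self N hconn]
    linarith
  obtain ⟨v, hvs, hvx, hvy, hvr, hvpos, hvmin⟩ := exists_min N hconn hxy
  obtain ⟨w, hws, hwx, hwz, hwr, hwpos, hwmin⟩ := exists_min N hconn hxz
  obtain ⟨w', hw's, hw'z, hw'y, hw'r, hw'pos, hw'min⟩ := exists_min N hconn hzy
  have h1 : N.energyR v w = (w x - w y) * N.energyR v v :=
    reproducing N hvs hvx hvy hvmin hws
  have h2 : N.energyR w v = (v x - v z) * N.energyR w w :=
    reproducing N hws hwx hwz hwmin hvs
  have h3 : N.energyR v w' = (w' x - w' y) * N.energyR v v :=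
    reproducing N hvs hvx hvy hvmin hw's
  have h4 : N.energyR w' v = (v z - v y) * N.energyR w' w' :=
    reproducing N hw's hw'z hw'y hw'min hvs
  rw [energyR_symm N v w] at h1
  rw [energyR_symm N v w'] at h3
  have e1 : (w x - w y) * N.energyR v v = (v x - v z) * N.energyR w w := by
    rw [← h1, h2]
  have e2 : (w' x - w' y) * N.energyR v v = (v z - v y) * N.energyR w' w' := by
    rw [← h3, h4]
  rw [dc_eq_inv N hconn hxy hvs hvx hvy hvpos hvmin,
      dc_eq_inv N hconn hxz hws hwx hwz hwpos hwmin,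
      dc_eq_inv N hconn hzy hw's hw'z hw'y hw'pos hw'min]
  have hb1 : (v x - v z) * N.energyR w w ≤ N.energyR v v := by
    rw [← e1, hwx]
    nlinarith [(hwr y).1, hvpos]
  have hb2 : (v z - v y) * N.energyR w' w' ≤ N.energyR v v := by
    rw [← e2, hw'y]
    nlinarith [(hw'r x).2, hvpos]
  rw [hvx] at hb1
  rw [hvy] at hb2
  have h5 : (1 - v z) / N.energyR v v ≤ 1 / N.energyR w w := by
    rw [div_le_div_iff₀ hvpos hwpos]
    linarith
  have h6 : (v z - 0) / N.energyR v v ≤ 1 / N.energyR w' w' := by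
    rw [div_le_div_iff₀ hvpos hw'pos]
    linarith
  have h7 : (1 - v z) / N.energyR v v + (v z - 0) / N.energyR v v =
      1 / N.energyR v v := by
    rw [← add_div]
    norm_num
  linarith

lemma dc_pos (hconn : N.Connected) {x y : V} (hxy : x ≠ y) : 0 < N.dc x y := by
  obtain ⟨v, hvs, hvx, hvy, _, hvpos, hvmin⟩ := exists_min N hconn hxy
  rw [dc_eq_inv N hconn hxy hvs hvx hvy hvpos hvmin]
  positivity

lemma dc_symm (x y : V) : N.dc x y = N.dc y x := by
  unfold Network.dc
  congr 1
  ext r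
  constructor <;> rintro ⟨u, h1, h2, h3⟩ <;> exact ⟨u, h1, h2, by rw [h3]; ring⟩

end Stmt17Aux


/-- On a connected network, `d_c` is a metric on `V`: the defining supremum is
finite (the set is bounded above), `d_c` is symmetric, vanishes exactly on the diagonal, and
satisfies the triangle inequality. -/
theorem stmt_17 {V : Type*} [Countable V] (N : Network V) (hconn : N.Connected) :
    (∀ x y : V, BddAbove (N.distSet x y)) ∧
    (∀ x y : V, N.dc x y = N.dc y x) ∧
    (∀ x y : V, N.dc x y = 0 ↔ x = y) ∧
    (∀ x y z : V, N.dc x y ≤ N.dc x z + N.dc z y) := by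
  refine ⟨fun x y => Stmt17Aux.bddAbove_distSet N hconn x y,
    fun x y => Stmt17Aux.dc_symm N x y, fun x y => ?_,
    fun x y z => Stmt17Aux.dc_triangle N hconn x y z⟩
  constructor
  · intro h
    by_contra hxy
    exact absurd h (ne_of_gt (Stmt17Aux.dc_pos N hconn hxy))
  · rintro rfl
    exact Stmt17Aux.dc_self N hconn x
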